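/- (Generating function of D_2.) Let s_n be the number of codewords of the code D_2 of length at most n. For every real z with |z| < 1/2, the series ∑_{n=0}^∞ s_n z^n converges and (1 − 2z + z³ − z⁴) · ∑_{n=0}^∞ s_n z^n = z³. -/

import Mathlib

/-- The code `D₂`: the word `110` together with all binary words that do not begin
with `110`, end with the suffix `0110`, and contain `0110` only as that suffix. -/
def D2 : Set (List Bool) :=
  {w | w = [true, true, false] ∨
    (¬ [true, true, false] <+: w ∧
     [false, true, true, false] <:+ w ∧
     ∀ u v, w = u ++ [false, true, true, false] ++ v → v = [])}

/-- `f2 n` is the number of codewords of `D₂` of length `n`. -/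
noncomputable def f2 (n : ℕ) : ℕ := Set.ncard {w ∈ D2 | w.length = n}

/-- `s2 n` is the number of codewords of `D₂` of length at most `n`. -/
noncomputable def s2 (n : ℕ) : ℕ := ∑ i ∈ Finset.Icc 1 n, f2 i

def E : ℕ → Finset (List Bool)
  | 0 => {[]}
  | k+1 => (E k).image (List.cons false) ∪ (E k).image (List.cons true)

lemma mem_E : ∀ k (w : List Bool), w ∈ E k ↔ w.length = k := by
  intro k
  induction k with
  | zero => intro w; cases w <;> simp [E]
  | succ k ih =>
    intro w
    cases w with
    | nil => simp [E]
    | cons b t => cases b <;> simp [E, ih]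

lemma E_card_le : ∀ k, (E k).card ≤ 2 ^ k := by
  intro k
  induction k with
  | zero => simp [E]
  | succ k ih =>
    calc (E (k+1)).card ≤ ((E k).image (List.cons false)).card + ((E k).image (List.cons true)).card :=
          Finset.card_union_le _ _
      _ ≤ (E k).card + (E k).card := add_le_add Finset.card_image_le Finset.card_image_le
      _ ≤ 2 ^ k + 2 ^ k := by omega
      _ = 2 ^ (k+1) := by ring

section count
variable {St : Type} (dstep : St → Bool → St) (acc : St → Bool)

lemma count_eq (Ncomp : St → ℕ → ℕ)
    (h0 : ∀ s, Ncomp s 0 = if acc s then 1 else 0)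
    (hs : ∀ s k, Ncomp s (k+1) = Ncomp (dstep s false) k + Ncomp (dstep s true) k) :
    ∀ k (s : St), ((E k).filter (fun u => acc (u.foldl dstep s) = true)).card = Ncomp s k := by
  intro k
  induction k with
  | zero =>
    intro s
    rw [h0]
    show ((({[]} : Finset (List Bool))).filter _).card = _
    by_cases h : acc s <;> simp [Finset.filter_singleton, h]
  | succ k ih =>
    intro s
    rw [hs]
    show (((E k).image (List.cons false) ∪ (E k).image (List.cons true)).filter _).card = _
    rw [Finset.filter_union, Finset.card_union_of_disjoint, Finset.filter_image, Finset.filter_image,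
      Finset.card_image_of_injective _ (fun a b h => by injection h),
      Finset.card_image_of_injective _ (fun a b h => by injection h)]
    · have e1 : ∀ b : Bool, ∀ u : List Bool, (b :: u).foldl dstep s = u.foldl dstep (dstep s b) := by
        intro b u; rfl
      simp only [e1]
      rw [ih, ih]
    · simp only [Finset.disjoint_left, Finset.mem_filter, Finset.mem_image]
      rintro x ⟨⟨u, _, rfl⟩, -⟩ ⟨⟨v, _, h⟩, -⟩
      simp at h
end count

inductive PS | p0 | p1 | p2 | pOK | pDead
  deriving DecidableEq

instance : Fintype PS :=
  ⟨⟨↑[PS.p0, PS.p1, PS.p2, PS.pOK, PS.pDead], by decide⟩, by intro x; cases x <;> decide⟩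

inductive KS | k0 | k1 | k2 | k3 | k4
  deriving DecidableEq

instance : Fintype KS :=
  ⟨⟨↑[KS.k0, KS.k1, KS.k2, KS.k3, KS.k4], by decide⟩, by intro x; cases x <;> decide⟩

open PS KS

def Dl : List Bool := [false, true, true, false]

def kcl (u : List Bool) : KS :=
  if Dl <:+: u then k4
  else if [false,true,true] <:+ u then k3
  else if [false,true] <:+ u then k2
  else if [false] <:+ u then k1
  else k0

def pcl (u : List Bool) : PS :=
  if u = [] then p0 else if u = [true] then p1 else if u = [true,true] then p2
  else if [true,true,false] <+: u then pDead else pOK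

lemma suffix_snoc (l : List Bool) (a b : Bool) (u : List Bool) :
    (l ++ [a]) <:+ (u ++ [b]) ↔ a = b ∧ l <:+ u := by
  rw [← List.reverse_prefix]
  simp only [List.reverse_append, List.reverse_cons, List.reverse_nil, List.nil_append,
    List.singleton_append]
  rw [List.cons_prefix_cons, List.reverse_prefix]

lemma suffix_excl {l₁ l₂ u : List Bool} (h1 : l₁ <:+ u) (h2 : l₂ <:+ u)
    (h : l₂.length ≤ l₁.length) : l₂ <:+ l₁ := by
  rw [← List.reverse_prefix] at h1 h2 ⊢
  exact List.prefix_of_prefix_length_le h2 h1 (by simpa using h)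

lemma infix_snoc (l u : List Bool) (b : Bool) :
    l <:+: (u ++ [b]) ↔ l <:+: u ∨ l <:+ (u ++ [b]) := by
  constructor
  · rintro ⟨s, t, hst⟩
    rcases List.eq_nil_or_concat t with rfl | ⟨t', c, rfl⟩
    · right; exact ⟨s, by simpa using hst⟩
    · left
      rw [List.concat_eq_append, ← List.append_assoc] at hst
      obtain ⟨h1, -⟩ := List.append_inj' hst rfl
      exact ⟨s, t', by simpa [List.append_assoc] using h1⟩
  · rintro (h | h)
    · exact h.trans ((List.prefix_append u [b]).isInfix)
    · exact h.isInfix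

def pstep : PS → Bool → PS
  | p0, false => pOK
  | p0, true => p1
  | p1, false => pOK
  | p1, true => p2
  | p2, false => pDead
  | p2, true => pOK
  | pOK, _ => pOK
  | pDead, _ => pDead

def kstep : KS → Bool → KS
  | k0, false => k1
  | k0, true => k0
  | k1, false => k1
  | k1, true => k2
  | k2, false => k1
  | k2, true => k3
  | k3, false => k4
  | k3, true => k0
  | k4, _ => k4

lemma kcl_step (u : List Bool) (b : Bool) : kcl (u ++ [b]) = kstep (kcl u) b := by
  have hI : Dl <:+: (u ++ [b]) ↔ Dl <:+: u ∨ (b = false ∧ [false,true,true] <:+ u) := by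
    rw [infix_snoc]
    apply or_congr Iff.rfl
    rw [show Dl = [false,true,true] ++ [false] from rfl, suffix_snoc]
    constructor
    · rintro ⟨h1, h2⟩; exact ⟨h1.symm, h2⟩
    · rintro ⟨h1, h2⟩; exact ⟨h1.symm, h2⟩
  have h3 : [false,true,true] <:+ (u ++ [b]) ↔ b = true ∧ [false,true] <:+ u := by
    rw [show [false,true,true] = [false,true] ++ [true] from rfl, suffix_snoc]
    constructor
    · rintro ⟨h1, h2⟩; exact ⟨h1.symm, h2⟩
    · rintro ⟨h1, h2⟩; exact ⟨h1.symm, h2⟩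
  have h2 : [false,true] <:+ (u ++ [b]) ↔ b = true ∧ [false] <:+ u := by
    rw [show [false,true] = [false] ++ [true] from rfl, suffix_snoc]
    constructor
    · rintro ⟨h1, h2⟩; exact ⟨h1.symm, h2⟩
    · rintro ⟨h1, h2⟩; exact ⟨h1.symm, h2⟩
  have h1 : [false] <:+ (u ++ [b]) ↔ b = false := by
    rw [show [false] = ([] : List Bool) ++ [false] from rfl, suffix_snoc]
    simp
  by_cases hi : Dl <:+: u
  · simp [kcl, kstep, hi, hI]
  · by_cases hs3 : [false,true,true] <:+ u
    · have e2 : ¬ [false,true] <:+ u := fun h => by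
        have := suffix_excl hs3 h (by simp); simp_all [List.suffix_cons_iff]
      have e1 : ¬ [false] <:+ u := fun h => by
        have := suffix_excl hs3 h (by simp); simp_all [List.suffix_cons_iff]
      cases b <;> simp [kcl, kstep, hi, hs3, hI, h3, h2, h1, e2, e1]
    · by_cases hs2 : [false,true] <:+ u
      · have e1 : ¬ [false] <:+ u := fun h => by
          have := suffix_excl hs2 h (by simp); simp_all [List.suffix_cons_iff]
        cases b <;> simp [kcl, kstep, hi, hs3, hs2, hI, h3, h2, h1, e1]
      · by_cases hs1 : [false] <:+ u <;>
          cases b <;> simp [kcl, kstep, hi, hs3, hs2, hs1, hI, h3, h2, h1]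

lemma pcl_step (u : List Bool) (b : Bool) : pcl (u ++ [b]) = pstep (pcl u) b := by
  match u with
  | [] => cases b <;> decide
  | [a] => cases a <;> cases b <;> decide
  | [a, c] => cases a <;> cases c <;> cases b <;> decide
  | a :: c :: d :: r =>
    have e : (a :: c :: d :: r) ++ [b] = a :: c :: d :: (r ++ [b]) := rfl
    simp only [pcl, e]
    by_cases h : [true,true,false] <+: a :: c :: d :: r
    · rw [List.cons_prefix_cons, List.cons_prefix_cons, List.cons_prefix_cons] at h
      obtain ⟨rfl, rfl, rfl, -⟩ := h
      simp [List.cons_prefix_cons, pstep]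
    · have h' : ¬ [true,true,false] <+: a :: c :: d :: (r ++ [b]) := by
        simp only [List.cons_prefix_cons] at h ⊢
        simpa using h
      simp only [List.cons_prefix_cons] at h
      simp [List.cons_prefix_cons, h', pstep, if_neg]
      split_ifs <;> simp_all [pstep]

abbrev St := PS × KS

def dstep (s : St) (b : Bool) : St := (pstep s.1 b, kstep s.2 b)

def acc (s : St) : Bool := s.1 ≠ p2 && s.1 ≠ pDead && s.2 ≠ k3 && s.2 ≠ k4

lemma foldl_state (u : List Bool) : u.foldl dstep (p0, k0) = (pcl u, kcl u) := by
  induction u using List.reverseRecOn with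
  | nil => decide
  | append_singleton u b ih =>
    rw [List.foldl_append, ih]
    show dstep (pcl u, kcl u) b = _
    rw [dstep, pcl_step, kcl_step]

lemma cond1_iff (u : List Bool) :
    Dl <:+: (u ++ [false,true,true]) ↔ Dl <:+: u ∨ [false,true,true] <:+ u := by
  have e : u ++ [false,true,true] = ((u ++ [false]) ++ [true]) ++ [true] := by simp
  rw [e, infix_snoc, infix_snoc, infix_snoc]
  have c1 : ¬ Dl <:+ ((u ++ [false]) ++ [true]) ++ [true] := by
    rw [show Dl = [false,true,true] ++ [false] from rfl, suffix_snoc]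
    simp
  have c2 : ¬ Dl <:+ (u ++ [false]) ++ [true] := by
    rw [show Dl = [false,true,true] ++ [false] from rfl, suffix_snoc]
    simp
  have c3 : Dl <:+ u ++ [false] ↔ [false,true,true] <:+ u := by
    rw [show Dl = [false,true,true] ++ [false] from rfl, suffix_snoc]
    simp
  tauto

lemma cond2_iff (u : List Bool) :
    [true,true,false] <+: (u ++ Dl) ↔ (u = [true,true] ∨ [true,true,false] <+: u) := by
  match u with
  | [] => decide
  | [a] => cases a <;> decide
  | [a, c] => cases a <;> cases c <;> decide
  | a :: c :: d :: r =>
    have e : (a :: c :: d :: r) ++ Dl = a :: c :: d :: (r ++ Dl) := rfl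
    rw [e]
    simp [List.cons_prefix_cons]

lemma acc_iff (u : List Bool) :
    acc (pcl u, kcl u) = true ↔
      (¬ Dl <:+: (u ++ [false,true,true]) ∧ ¬ [true,true,false] <+: (u ++ Dl)) := by
  rw [cond1_iff, cond2_iff]
  have hk : (kcl u ≠ k3 ∧ kcl u ≠ k4) ↔ ¬(Dl <:+: u ∨ [false,true,true] <:+ u) := by
    unfold kcl
    split_ifs with h1 h2 h3 h4 <;> simp_all
  have hp : (pcl u ≠ p2 ∧ pcl u ≠ pDead) ↔ ¬(u = [true,true] ∨ [true,true,false] <+: u) := by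
    unfold pcl
    split_ifs with h1 h2 h3 h4 <;> simp_all
  simp only [acc, Bool.and_eq_true, decide_eq_true_eq, ne_eq, Bool.not_eq_true',
    decide_eq_false_iff_not] at *
  constructor
  · rintro ⟨⟨⟨a1, a2⟩, a3⟩, a4⟩
    exact ⟨hk.mp ⟨a3, a4⟩, hp.mp ⟨a1, a2⟩⟩
  · rintro ⟨c1, c2⟩
    obtain ⟨a3, a4⟩ := hk.mpr c1
    obtain ⟨a1, a2⟩ := hp.mpr c2
    exact ⟨⟨⟨a1, a2⟩, a3⟩, a4⟩

def Ncomp : St → ℕ → ℕ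
  | s, 0 => if acc s then 1 else 0
  | s, k+1 => Ncomp (dstep s false) k + Ncomp (dstep s true) k

lemma Ncomp_succ (s : St) (k : ℕ) :
    Ncomp s (k+1) = Ncomp (dstep s false) k + Ncomp (dstep s true) k := rfl

lemma Ncomp_rec : ∀ k, ∀ s : St, Ncomp s (k+4) + Ncomp s (k+1) = 2 * Ncomp s (k+3) + Ncomp s k := by
  intro k
  induction k with
  | zero => decide
  | succ k ih =>
    intro s
    have h1 : Ncomp s (k+1+4) = Ncomp (dstep s false) (k+4) + Ncomp (dstep s true) (k+4) := rfl
    have h2 : Ncomp s (k+1+1) = Ncomp (dstep s false) (k+1) + Ncomp (dstep s true) (k+1) := rfl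
    have h3 : Ncomp s (k+1+3) = Ncomp (dstep s false) (k+3) + Ncomp (dstep s true) (k+3) := rfl
    have h4 : Ncomp s (k+1) = Ncomp (dstep s false) k + Ncomp (dstep s true) k := rfl
    rw [h1, h2, h3, h4]
    have := ih (dstep s false)
    have := ih (dstep s true)
    omega

def G (k : ℕ) : ℕ := Ncomp (p0, k0) k

lemma mem_D2_len (k : ℕ) (w : List Bool) :
    (w ∈ D2 ∧ w.length = k + 4) ↔
    ∃ u, u.length = k ∧
      (¬ Dl <:+: (u ++ [false,true,true]) ∧ ¬ [true,true,false] <+: (u ++ Dl)) ∧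
      w = u ++ Dl := by
  constructor
  · rintro ⟨hw, hlen⟩
    simp only [D2, Set.mem_setOf_eq] at hw
    rcases hw with rfl | ⟨hpre, ⟨u, rfl⟩, honly⟩
    · simp at hlen
    · refine ⟨u, ?_, ⟨?_, hpre⟩, rfl⟩
      · simp [Dl] at hlen; omega
      · rintro ⟨s, t, hst⟩
        have he : u ++ Dl = s ++ [false,true,true,false] ++ (t ++ [false]) := by
          have : u ++ Dl = (u ++ [false,true,true]) ++ [false] := by simp [Dl]
          rw [this, ← hst]
          simp [List.append_assoc, Dl]
        exact absurd (honly s (t ++ [false]) he) (by simp)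
  · rintro ⟨u, hlen, ⟨h1, h2⟩, rfl⟩
    refine ⟨?_, by simp [Dl, hlen]⟩
    simp only [D2, Set.mem_setOf_eq]
    refine Or.inr ⟨h2, ⟨u, rfl⟩, ?_⟩
    intro a v hav
    by_contra hv
    rcases List.eq_nil_or_concat v with rfl | ⟨v', c, rfl⟩
    · exact hv rfl
    · apply h1
      have h5 : (u ++ [false,true,true]) ++ [false] = (a ++ [false,true,true,false] ++ v') ++ [c] := by
        have : u ++ Dl = (u ++ [false,true,true]) ++ [false] := by simp [Dl]
        rw [← this, hav]
        simp [List.append_assoc]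
      obtain ⟨h6, -⟩ := List.append_inj' h5 rfl
      exact ⟨a, v', by simpa [Dl] using h6.symm⟩

lemma f2_eq (k : ℕ) : f2 (k + 4) = G k := by
  have hset : {w ∈ D2 | w.length = k + 4} =
      (fun u => u ++ Dl) '' {u : List Bool | u.length = k ∧ acc (u.foldl dstep (p0, k0)) = true} := by
    ext w
    simp only [Set.mem_sep_iff, Set.mem_image, Set.mem_setOf_eq]
    rw [mem_D2_len]
    constructor
    · rintro ⟨u, hlen, hP, rfl⟩
      exact ⟨u, ⟨hlen, by rw [foldl_state, acc_iff]; exact hP⟩, rfl⟩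
    · rintro ⟨u, ⟨hlen, hP⟩, rfl⟩
      rw [foldl_state, acc_iff] at hP
      exact ⟨u, hlen, hP, rfl⟩
  have hset2 : {u : List Bool | u.length = k ∧ acc (u.foldl dstep (p0, k0)) = true} =
      ↑((E k).filter (fun u => acc (u.foldl dstep (p0, k0)) = true)) := by
    ext u
    simp [mem_E]
  rw [f2, hset, Set.ncard_image_of_injective _ (List.append_left_injective Dl), hset2,
    Set.ncard_coe_finset, count_eq dstep acc Ncomp (fun s => rfl) (fun s k => rfl)]
  rfl

lemma f2_small_empty (n : ℕ) (h1 : n ≠ 3) (h2 : n < 4) : f2 n = 0 := by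
  have : {w ∈ D2 | w.length = n} = ∅ := by
    ext w
    simp only [Set.mem_sep_iff, Set.mem_empty_iff_false, iff_false, not_and]
    intro hw hlen
    simp only [D2, Set.mem_setOf_eq] at hw
    rcases hw with rfl | ⟨-, hsuf, -⟩
    · simp at hlen; omega
    · have := hsuf.length_le
      simp at this
      omega
  rw [f2, this, Set.ncard_empty]

lemma f2_three : f2 3 = 1 := by
  have : {w ∈ D2 | w.length = 3} = {[true, true, false]} := by
    ext w
    simp only [Set.mem_sep_iff, Set.mem_singleton_iff]
    constructor
    · rintro ⟨hw, hlen⟩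
      simp only [D2, Set.mem_setOf_eq] at hw
      rcases hw with rfl | ⟨-, hsuf, -⟩
      · rfl
      · have := hsuf.length_le
        simp at this
        omega
    · rintro rfl
      exact ⟨Or.inl rfl, rfl⟩
  rw [f2, this, Set.ncard_singleton]

lemma fkey (k : ℕ) : f2 (k+5) + f2 (k+2) = 2 * f2 (k+4) + f2 (k+1) := by
  match k with
  | 0 =>
    rw [show (5:ℕ) = 1 + 4 from rfl, f2_eq 1, show (4:ℕ) = 0 + 4 from rfl, f2_eq 0,
      f2_small_empty 2 (by omega) (by omega), f2_small_empty 1 (by omega) (by omega)]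
    decide
  | 1 =>
    rw [show (1:ℕ)+5 = 2 + 4 from rfl, f2_eq 2, show (1:ℕ)+4 = 1 + 4 from rfl, f2_eq 1,
      show (1:ℕ)+2 = 3 from rfl, f2_three, show (1:ℕ)+1 = 2 from rfl,
      f2_small_empty 2 (by omega) (by omega)]
    decide
  | 2 =>
    rw [show (2:ℕ)+5 = 3 + 4 from rfl, f2_eq 3, show (2:ℕ)+4 = 2 + 4 from rfl, f2_eq 2,
      show (2:ℕ)+2 = 0 + 4 from rfl, f2_eq 0, show (2:ℕ)+1 = 3 from rfl, f2_three]
    decide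
  | (k+3) =>
    rw [show k+3+5 = (k+4) + 4 from rfl, f2_eq, show k+3+2 = k+1+4 from rfl, f2_eq,
      show k+3+4 = (k+3)+4 from rfl, f2_eq, show k+3+1 = k+4 from rfl, f2_eq]
    exact Ncomp_rec k (p0, k0)

lemma s2_succ (n : ℕ) : s2 (n+1) = s2 n + f2 (n+1) :=
  Finset.sum_Icc_succ_top (by omega) f2

lemma s2_zero : s2 0 = 0 := by simp [s2]

lemma s2_one : s2 1 = 0 := by
  rw [s2_succ, s2_zero, f2_small_empty 1 (by omega) (by omega)]

lemma s2_two : s2 2 = 0 := by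
  rw [show (2:ℕ) = 1 + 1 from rfl, s2_succ, s2_one, f2_small_empty 2 (by omega) (by omega)]

lemma s2_three : s2 3 = 1 := by
  rw [show (3:ℕ) = 2 + 1 from rfl, s2_succ, s2_two, f2_three]

lemma s2_four : s2 4 = 2 := by
  rw [show (4:ℕ) = 3 + 1 from rfl, s2_succ, s2_three,
    show (3:ℕ)+1 = 0 + 4 from rfl, f2_eq 0]
  decide

lemma skey : ∀ k, s2 (k+4) + s2 (k+1) = 2 * s2 (k+3) + s2 k := by
  intro k
  induction k with
  | zero => rw [s2_four, s2_one, s2_three, s2_zero]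
  | succ k ih =>
    have e5 : s2 (k+1+4) = s2 (k+4) + f2 (k+5) := s2_succ (k+4)
    have e2 : s2 (k+1+1) = s2 (k+1) + f2 (k+2) := s2_succ (k+1)
    have e4 : s2 (k+1+3) = s2 (k+3) + f2 (k+4) := s2_succ (k+3)
    have e1 : s2 (k+1) = s2 k + f2 (k+1) := s2_succ k
    have hf := fkey k
    omega

lemma G_le (k : ℕ) : G k ≤ 2 ^ k := by
  have h := count_eq dstep acc Ncomp (fun s => rfl) (fun s k => rfl) k (p0, k0)
  calc G k = ((E k).filter (fun u => acc (u.foldl dstep (p0, k0)) = true)).card := h.symm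
    _ ≤ (E k).card := Finset.card_filter_le _ _
    _ ≤ 2 ^ k := E_card_le k

lemma f2_le (n : ℕ) : f2 n ≤ 2 ^ n := by
  match n with
  | 0 => rw [f2_small_empty 0 (by omega) (by omega)]; omega
  | 1 => rw [f2_small_empty 1 (by omega) (by omega)]; omega
  | 2 => rw [f2_small_empty 2 (by omega) (by omega)]; omega
  | 3 => rw [f2_three]; omega
  | (k+4) =>
    calc f2 (k+4) = G k := f2_eq k
      _ ≤ 2 ^ k := G_le k
      _ ≤ 2 ^ (k+4) := Nat.pow_le_pow_right (by omega) (by omega)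

lemma s2_le (n : ℕ) : s2 n ≤ 2 ^ (n+1) := by
  induction n with
  | zero => rw [s2_zero]; omega
  | succ n ih =>
    have := f2_le (n+1)
    have e := s2_succ n
    have : 2 ^ (n+1) + 2 ^ (n+1) = 2 ^ (n+2) := by ring
    omega

/-- generating function of `D₂`: for every real `z` with
`|z| < 1/2`, the series `∑ s_n zⁿ` converges and
`(1 - 2z + z³ - z⁴) · ∑_{n=0}^∞ s_n zⁿ = z³`. -/
theorem d2_generating_function (z : ℝ) (hz : |z| < 1 / 2) :
    ∃ S : ℝ, HasSum (fun n : ℕ => (s2 n : ℝ) * z ^ n) S ∧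
      (1 - 2 * z + z ^ 3 - z ^ 4) * S = z ^ 3 := by
  have hr : 2 * |z| < 1 := by linarith
  have hsummable : Summable (fun n : ℕ => (s2 n : ℝ) * z ^ n) := by
    apply Summable.of_norm_bounded (g := fun n : ℕ => 2 * (2 * |z|) ^ n)
      (((summable_geometric_of_lt_one (by positivity) hr)).mul_left 2)
    intro n
    rw [norm_mul, norm_pow, Real.norm_eq_abs, Real.norm_eq_abs]
    have h1 : |(s2 n : ℝ)| = (s2 n : ℝ) := abs_of_nonneg (by positivity)
    rw [h1, mul_pow]
    have h2 : (s2 n : ℝ) ≤ 2 * 2 ^ n := by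
      have := s2_le n
      have : (s2 n : ℝ) ≤ (2 ^ (n+1) : ℕ) := by exact_mod_cast this
      rw [pow_succ] at this
      push_cast at this
      linarith
    have h3 : (0:ℝ) ≤ |z| ^ n := by positivity
    nlinarith [pow_nonneg (abs_nonneg z) n]
  set S := ∑' n : ℕ, (s2 n : ℝ) * z ^ n with hS
  have h : HasSum (fun n : ℕ => (s2 n : ℝ) * z ^ n) S := hsummable.hasSum
  have hshift : ∀ j : ℕ, HasSum (fun n : ℕ => if j ≤ n then (s2 (n-j) : ℝ) * z ^ n else 0) (S * z ^ j) := by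
    intro j
    have hinj : Function.Injective (fun n : ℕ => n + j) := fun a b hab => by
      simpa using hab
    have h0 : ∀ x ∉ Set.range (fun n : ℕ => n + j),
        (if j ≤ x then (s2 (x-j) : ℝ) * z ^ x else 0) = 0 := by
      intro x hx
      rw [if_neg]
      intro hle
      exact hx ⟨x - j, by simp; omega⟩
    rw [← Function.Injective.hasSum_iff hinj h0]
    have he : ((fun x => if j ≤ x then (s2 (x-j) : ℝ) * z ^ x else 0) ∘ fun n : ℕ => n + j)
        = fun n : ℕ => ((s2 n : ℝ) * z ^ n) * z ^ j := by
      funext n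
      simp only [Function.comp_apply, Nat.le_add_left, if_pos, Nat.add_sub_cancel]
      rw [pow_add]
      ring
    rw [he]
    exact h.mul_right _
  have H := (((hshift 0).sub ((hshift 1).mul_left 2)).add (hshift 3)).sub (hshift 4)
  have hfun : (fun n : ℕ =>
      ((if 0 ≤ n then (s2 (n-0) : ℝ) * z ^ n else 0)
        - 2 * (if 1 ≤ n then (s2 (n-1) : ℝ) * z ^ n else 0)
        + (if 3 ≤ n then (s2 (n-3) : ℝ) * z ^ n else 0))
        - (if 4 ≤ n then (s2 (n-4) : ℝ) * z ^ n else 0))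
      = fun n : ℕ => if n = 3 then z ^ 3 else 0 := by
    funext n
    match n with
    | 0 => simp [s2_zero]
    | 1 => simp [s2_zero, s2_one]
    | 2 => simp [s2_one, s2_two]
    | 3 =>
      norm_num
      rw [s2_three, s2_two, s2_zero]
      norm_num
    | (k+4) =>
      have h0 : (0:ℕ) ≤ k+4 := by omega
      have h1 : (1:ℕ) ≤ k+4 := by omega
      have h3 : (3:ℕ) ≤ k+4 := by omega
      have h4 : (4:ℕ) ≤ k+4 := by omega
      rw [if_pos h0, if_pos h1, if_pos h3, if_pos h4, if_neg (by omega : ¬ k+4 = 3)]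
      have e1 : k+4-0 = k+4 := by omega
      have e2 : k+4-1 = k+3 := by omega
      have e3 : k+4-3 = k+1 := by omega
      have e4 : k+4-4 = k := by omega
      rw [e1, e2, e3, e4]
      have hc : (s2 (k+4) : ℝ) + s2 (k+1) = 2 * s2 (k+3) + s2 k := by
        exact_mod_cast skey k
      linear_combination z ^ (k+4) * hc
  rw [hfun] at H
  have H2 : HasSum (fun n : ℕ => if n = 3 then z ^ 3 else 0) (z ^ 3) := hasSum_ite_eq 3 (z ^ 3)
  have hval : S * z ^ 0 - 2 * (S * z ^ 1) + S * z ^ 3 - S * z ^ 4 = z ^ 3 := H.unique H2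
  exact ⟨S, h, by linear_combination hval⟩
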